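/- Let μ > 0, p > 0, 0 ≤ e < 1, t₀ ∈ ℝ, and let f : ℝ → ℝ be differentiable with f'(t) = √(μ/p³)·(1 + e·cos f(t))² for all t. Then for every t, ∫_{f(t₀)}^{f(t)} 1/(1 + e·cos τ)² dτ = √(μ/p³)·(t − t₀). -/

import Mathlib

open intervalIntegral in
/-- The Yamanaka–Ankersen integral `J(t) = ∫_{f(t₀)}^{f(t)} dτ/(1+e·cos τ)²` grows
linearly with time: it equals `√(μ/p³)·(t − t₀)`. -/
theorem stmt_1 (μ p e : ℝ) (hμ : 0 < μ) (hp : 0 < p) (he0 : 0 ≤ e) (he1 : e < 1)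
    (t₀ : ℝ) (f : ℝ → ℝ) (hf : Differentiable ℝ f)
    (hf' : ∀ t, deriv f t = Real.sqrt (μ / p ^ 3) * (1 + e * Real.cos (f t)) ^ 2) :
    ∀ t, (∫ τ in (f t₀)..(f t), 1 / (1 + e * Real.cos τ) ^ 2) =
      Real.sqrt (μ / p ^ 3) * (t - t₀) := by
  set c := Real.sqrt (μ / p ^ 3) with hc
  have hpos : ∀ τ : ℝ, 0 < 1 + e * Real.cos τ := by
    intro τ
    nlinarith [Real.neg_one_le_cos τ, Real.cos_le_one τ]
  have hcont : Continuous fun τ : ℝ => 1 / (1 + e * Real.cos τ) ^ 2 := by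
    apply Continuous.div continuous_const (by continuity)
    intro τ
    exact pow_ne_zero 2 (hpos τ).ne'
  -- antiderivative
  set h : ℝ → ℝ := fun x => ∫ τ in (f t₀)..x, 1 / (1 + e * Real.cos τ) ^ 2 with hh
  have hderiv : ∀ x, HasDerivAt h (1 / (1 + e * Real.cos x) ^ 2) x := by
    intro x
    exact intervalIntegral.integral_hasDerivAt_right
      (hcont.intervalIntegrable _ _)
      (hcont.stronglyMeasurableAtFilter _ _)
      hcont.continuousAt
  set F : ℝ → ℝ := fun t => h (f t) - c * (t - t₀) with hF
  have hF' : ∀ t, HasDerivAt F 0 t := by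
    intro t
    have h1 : HasDerivAt f (c * (1 + e * Real.cos (f t)) ^ 2) t := by
      rw [← hf' t]; exact (hf t).hasDerivAt
    have h2 := (hderiv (f t)).comp t h1
    have h3 : HasDerivAt (fun t : ℝ => c * (t - t₀)) c t := by
      simpa using ((hasDerivAt_id t).sub_const t₀).const_mul c
    have h4 := h2.sub h3
    have heq : 1 / (1 + e * Real.cos (f t)) ^ 2 * (c * (1 + e * Real.cos (f t)) ^ 2) - c = 0 := by
      have hne : (1 + e * Real.cos (f t)) ^ 2 ≠ 0 := pow_ne_zero 2 (hpos (f t)).ne'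
      field_simp
      rw [div_self (hpos (f t)).ne', sub_self, mul_zero]
    rwa [heq] at h4
  have hconst : ∀ t, F t = F t₀ := by
    intro t
    have : ∀ x, deriv F x = 0 := fun x => (hF' x).deriv
    exact is_const_of_deriv_eq_zero (fun x => (hF' x).differentiableAt) this t t₀
  intro t
  have := hconst t
  simp only [hF, hh] at this
  have h0 : (∫ τ in (f t₀)..(f t₀), 1 / (1 + e * Real.cos τ) ^ 2) = 0 :=
    intervalIntegral.integral_same
  rw [h0] at this
  linarith
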